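/- Let μ be the uniform probability measure on D (Lebesgue measure restricted to D, normalized to total mass 1). Then the pushforward of μ under the projection (x,y) ↦ x is absolutely continuous with respect to Lebesgue measure with density f(s) = (12/π)·(s/2 − 𝟙_{s>1}·√(s² − s^{−2})) for 0 < s < (4/3)^{1/4}, and f(s) = 0 otherwise. In particular, the length of the shortest basis vector of a random unimodular lattice in dimension 2 has this probability density function. -/

import Mathlib

open MeasureTheory Real

/-- The region `D = {(x,y) : x > 0, |y| ≤ x/2, and if x > 1 then y² ≥ x² - x⁻²}`,
parametrizing a fundamental domain for `SL₂(ℝ)/SL₂^±(ℤ)`. -/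
def Dset : Set (ℝ × ℝ) :=
  {p | 0 < p.1 ∧ |p.2| ≤ p.1 / 2 ∧ (1 < p.1 → p.1 ^ 2 - (p.1 ^ 2)⁻¹ ≤ p.2 ^ 2)}

/-- The uniform probability measure on `D`. -/
noncomputable def μD : Measure (ℝ × ℝ) := (volume Dset)⁻¹ • volume.restrict Dset

noncomputable def ccD : ℝ := (4 / 3 : ℝ) ^ ((1 : ℝ) / 4)

lemma ccD_pow : ccD ^ 4 = 4 / 3 := by
  rw [ccD, ← Real.rpow_natCast ((4/3:ℝ)^((1:ℝ)/4)) 4, ← Real.rpow_mul (by norm_num)]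
  norm_num

lemma one_lt_ccD : 1 < ccD := by
  rw [ccD, Real.one_lt_rpow_iff_of_pos (by norm_num)]
  norm_num

lemma lt_ccD_iff {s : ℝ} (hs : 0 ≤ s) : s < ccD ↔ s ^ 4 < 4 / 3 := by
  rw [← ccD_pow]
  exact (pow_lt_pow_iff_left₀ hs (by linarith [one_lt_ccD]) (by norm_num)).symm

noncomputable def gD (s : ℝ) : ℝ :=
  if 0 < s ∧ s < ccD then s - (if 1 < s then 2 * Real.sqrt (s ^ 2 - (s ^ 2)⁻¹) else 0) else 0

lemma fiber_eq (s : ℝ) :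
    volume {y : ℝ | (s, y) ∈ Dset} = ENNReal.ofReal (gD s) := by
  rcases le_or_gt s 0 with hs | hs
  · have h1 : {y : ℝ | (s, y) ∈ Dset} = ∅ := by
      ext y; simp only [Dset, Set.mem_setOf_eq, Set.mem_empty_iff_false, iff_false]
      rintro ⟨h, -⟩; linarith
    have h2 : gD s = 0 := by
      rw [gD, if_neg]; rintro ⟨h, -⟩; linarith
    simp [h1, h2]
  rcases le_or_gt s 1 with hs1 | hs1
  · -- 0 < s ≤ 1 : fiber is Icc (-(s/2)) (s/2)
    have h1 : {y : ℝ | (s, y) ∈ Dset} = Set.Icc (-(s/2)) (s/2) := by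
      ext y
      simp only [Dset, Set.mem_setOf_eq, Set.mem_Icc, abs_le]
      constructor
      · rintro ⟨-, ⟨h1, h2⟩, -⟩; exact ⟨h1, h2⟩
      · rintro ⟨h1, h2⟩; exact ⟨hs, ⟨h1, h2⟩, fun h => absurd h (by linarith)⟩
    have h2 : gD s = s := by
      rw [gD, if_pos ⟨hs, lt_of_le_of_lt hs1 one_lt_ccD⟩, if_neg (by linarith)]
      ring
    rw [h1, h2, Real.volume_Icc]
    norm_num
  · -- 1 < s
    set a := Real.sqrt (s ^ 2 - (s ^ 2)⁻¹) with ha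
    have ht : 0 < s ^ 2 - (s ^ 2)⁻¹ := by
      have h2 : 1 < s ^ 2 := by nlinarith
      have : (s ^ 2)⁻¹ < 1 := by
        rw [inv_lt_one_iff₀]; right; exact h2
      linarith
    have hapos : 0 < a := Real.sqrt_pos.mpr ht
    have ha2 : a ^ 2 = s ^ 2 - (s ^ 2)⁻¹ := Real.sq_sqrt ht.le
    have h1 : {y : ℝ | (s, y) ∈ Dset} = Set.Icc (-(s/2)) (-a) ∪ Set.Icc a (s/2) := by
      ext y
      have key : s ^ 2 - (s ^ 2)⁻¹ ≤ y ^ 2 ↔ a ≤ |y| := by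
        rw [ha, ← Real.sqrt_sq_eq_abs, Real.sqrt_le_sqrt_iff (sq_nonneg y)]
      simp only [Dset, Set.mem_setOf_eq, Set.mem_union, Set.mem_Icc, abs_le]
      constructor
      · rintro ⟨-, ⟨h1, h2⟩, h3⟩
        rcases le_abs.mp (key.mp (h3 hs1)) with h4 | h4
        · right; exact ⟨h4, h2⟩
        · left; exact ⟨h1, by linarith⟩
      · rintro (⟨h1, h2⟩ | ⟨h1, h2⟩)
        · exact ⟨hs, ⟨h1, by linarith⟩, fun _ => key.mpr (le_abs.mpr (Or.inr (by linarith)))⟩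
        · exact ⟨hs, ⟨by linarith, h2⟩, fun _ => key.mpr (le_abs.mpr (Or.inl h1))⟩
    have hdisj : Disjoint (Set.Icc (-(s/2)) (-a)) (Set.Icc a (s/2)) := by
      apply Set.disjoint_left.mpr
      rintro y ⟨-, h1⟩ ⟨h2, -⟩
      linarith
    rw [h1, measure_union hdisj measurableSet_Icc, Real.volume_Icc, Real.volume_Icc]
    have hsum : ENNReal.ofReal (-a - -(s/2)) + ENNReal.ofReal (s/2 - a)
        = ENNReal.ofReal (s - 2 * a) := by
      rcases le_or_gt a (s/2) with hle | hlt
      · rw [← ENNReal.ofReal_add (by linarith) (by linarith)]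
        ring_nf
      · rw [ENNReal.ofReal_of_nonpos (by linarith), ENNReal.ofReal_of_nonpos (by linarith),
          ENNReal.ofReal_of_nonpos (by linarith)]
        simp
    rw [hsum]
    -- now match with gD
    rcases lt_or_ge s ccD with hc | hc
    · rw [gD, if_pos ⟨hs, hc⟩, if_pos hs1]
    · have hg : gD s = 0 := by
        rw [gD, if_neg]; rintro ⟨-, h⟩; exact absurd h (not_lt.mpr hc)
      have h43 : (4:ℝ)/3 ≤ s ^ 4 := by
        by_contra h
        exact absurd ((lt_ccD_iff hs.le).mpr (not_le.mp h)) (not_lt.mpr hc)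
      have hsa : s ≤ 2 * a := by
        have h4 : s / 2 ≤ a := by
          rw [ha, Real.le_sqrt (by linarith) ht.le]
          have hs2 : (0:ℝ) < s ^ 2 := by positivity
          rw [div_pow, ← sub_nonneg]
          have : s ^ 2 - (s ^ 2)⁻¹ - s ^ 2 / 2 ^ 2 = (3 * s ^ 4 - 4) / (4 * s ^ 2) := by
            field_simp; ring
          rw [this]
          apply div_nonneg (by nlinarith) (by positivity)
        linarith
      rw [hg, ENNReal.ofReal_of_nonpos (by linarith)]
      simp

lemma measurableSet_Dset : MeasurableSet Dset := by
  have h : Dset = {p : ℝ × ℝ | 0 < p.1} ∩ ({p | |p.2| ≤ p.1 / 2} ∩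
      ({p : ℝ × ℝ | p.1 ≤ 1} ∪ {p | p.1 ^ 2 - (p.1 ^ 2)⁻¹ ≤ p.2 ^ 2})) := by
    ext p
    simp only [Dset, Set.mem_setOf_eq, Set.mem_inter_iff, Set.mem_union]
    constructor
    · rintro ⟨h1, h2, h3⟩
      refine ⟨h1, h2, ?_⟩
      rcases le_or_gt p.1 1 with h | h
      · exact Or.inl h
      · exact Or.inr (h3 h)
    · rintro ⟨h1, h2, h3 | h3⟩
      · exact ⟨h1, h2, fun h => absurd h (not_lt.mpr h3)⟩
      · exact ⟨h1, h2, fun _ => h3⟩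
  rw [h]
  apply (measurableSet_lt measurable_const measurable_fst).inter
  apply MeasurableSet.inter
  · exact measurableSet_le (measurable_snd.abs) (measurable_fst.div_const 2)
  · apply MeasurableSet.union
    · exact measurableSet_le measurable_fst measurable_const
    · exact measurableSet_le (((measurable_fst.pow_const 2).sub
        ((measurable_fst.pow_const 2).inv))) (measurable_snd.pow_const 2)

lemma measurable_gD : Measurable gD := by
  apply Measurable.ite
  · exact (measurableSet_Ioi.inter measurableSet_Iio :
      MeasurableSet ({s : ℝ | 0 < s} ∩ {s | s < ccD}))
  · apply Measurable.sub measurable_id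
    apply Measurable.ite measurableSet_Ioi
    · exact ((measurable_id.pow_const 2).sub
        ((measurable_id.pow_const 2).inv)).sqrt.const_mul 2
    · exact measurable_const
  · exact measurable_const

lemma map_fst_restrict :
    Measure.map Prod.fst (volume.restrict Dset)
      = volume.withDensity (fun s => ENNReal.ofReal (gD s)) := by
  ext A hA
  rw [Measure.map_apply measurable_fst hA,
    Measure.restrict_apply (hA.preimage measurable_fst),
    withDensity_apply _ hA, ← lintegral_indicator hA,
    Measure.volume_eq_prod,
    Measure.prod_apply ((hA.preimage measurable_fst).inter measurableSet_Dset)]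
  congr 1
  ext s
  by_cases hs : s ∈ A
  · have : Prod.mk s ⁻¹' (Prod.fst ⁻¹' A ∩ Dset) = {y : ℝ | (s, y) ∈ Dset} := by
      ext y; simp [hs]
    rw [this, fiber_eq, Set.indicator_of_mem hs]
  · have : Prod.mk s ⁻¹' (Prod.fst ⁻¹' A ∩ Dset) = ∅ := by
      ext y; simp [hs]
    rw [this, Set.indicator_of_notMem hs]
    simp

lemma gD_eq : gD = fun s => (Set.Ioo (0:ℝ) ccD).indicator (fun s => s) s
    - (Set.Ioo (1:ℝ) ccD).indicator (fun s => 2 * Real.sqrt (s ^ 2 - (s ^ 2)⁻¹)) s := by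
  funext s
  rw [gD]
  by_cases h1 : 0 < s ∧ s < ccD
  · rw [if_pos h1, Set.indicator_of_mem (Set.mem_Ioo.mpr h1)]
    by_cases h2 : 1 < s
    · rw [if_pos h2, Set.indicator_of_mem (Set.mem_Ioo.mpr ⟨h2, h1.2⟩)]
    · rw [if_neg h2, Set.indicator_of_notMem (fun h => h2 (Set.mem_Ioo.mp h).1)]
  · rw [if_neg h1,
      Set.indicator_of_notMem (fun h => h1 (Set.mem_Ioo.mp h)),
      Set.indicator_of_notMem (fun h => h1
        ⟨lt_trans zero_lt_one (Set.mem_Ioo.mp h).1, (Set.mem_Ioo.mp h).2⟩)]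
    simp

lemma contOn_sq : ContinuousOn (fun s : ℝ => 2 * Real.sqrt (s ^ 2 - (s ^ 2)⁻¹))
    (Set.Icc 1 ccD) := by
  apply ContinuousOn.mul continuousOn_const
  apply ContinuousOn.sqrt
  apply ContinuousOn.sub (continuous_pow 2).continuousOn
  apply ContinuousOn.inv₀ (continuous_pow 2).continuousOn
  intro x hx
  have : (1:ℝ) ≤ x := hx.1
  positivity

lemma int1 : Integrable ((Set.Ioo (0:ℝ) ccD).indicator (fun s => s)) := by
  rw [integrable_indicator_iff measurableSet_Ioo]
  exact (continuous_id.continuousOn.integrableOn_compact isCompact_Icc).mono_set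
    Set.Ioo_subset_Icc_self

lemma int2 : Integrable ((Set.Ioo (1:ℝ) ccD).indicator
    (fun s => 2 * Real.sqrt (s ^ 2 - (s ^ 2)⁻¹))) := by
  rw [integrable_indicator_iff measurableSet_Ioo]
  exact (contOn_sq.integrableOn_compact isCompact_Icc).mono_set Set.Ioo_subset_Icc_self

lemma sqrt_four : Real.sqrt 4 = 2 := by
  rw [show (4:ℝ) = 2 ^ 2 by norm_num, Real.sqrt_sq (by norm_num)]

lemma ccD_sq : ccD ^ 2 = 2 * (Real.sqrt 3)⁻¹ := by
  rw [ccD, ← Real.rpow_natCast ((4/3:ℝ)^((1:ℝ)/4)) 2, ← Real.rpow_mul (by norm_num)]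
  rw [show (1:ℝ)/4 * (2:ℕ) = 1/2 by push_cast; norm_num, ← Real.sqrt_eq_rpow]
  rw [show (4/3:ℝ) = 4 * 3⁻¹ by norm_num, Real.sqrt_mul (by norm_num), Real.sqrt_inv,
    sqrt_four]

lemma arctan_inv_sqrt_three : Real.arctan (Real.sqrt 3)⁻¹ = π / 6 := by
  rw [show (Real.sqrt 3)⁻¹ = Real.tan (π/6) by rw [Real.tan_pi_div_six]; norm_num]
  exact Real.arctan_tan (by linarith [pi_pos]) (by linarith [pi_pos])

lemma integralA : ∫ x in (1:ℝ)..ccD, Real.sqrt (x ^ 2 - (x ^ 2)⁻¹)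
    = ((Real.sqrt 3)⁻¹ - π / 6) / 2 := by
  have hle : (1:ℝ) ≤ ccD := one_lt_ccD.le
  set F : ℝ → ℝ :=
    fun x => (Real.sqrt (x ^ 4 - 1) - Real.arctan (Real.sqrt (x ^ 4 - 1))) / 2 with hF
  have hc0 : Continuous fun x : ℝ => Real.sqrt (x ^ 4 - 1) :=
    Real.continuous_sqrt.comp (by continuity)
  have hcontF : ContinuousOn F (Set.Icc 1 ccD) :=
    ((hc0.sub (Real.continuous_arctan.comp hc0)).div_const 2).continuousOn
  have hint : IntervalIntegrable (fun x => Real.sqrt (x ^ 2 - (x ^ 2)⁻¹)) volume 1 ccD := by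
    apply ContinuousOn.intervalIntegrable
    rw [Set.uIcc_of_le hle]
    have := contOn_sq
    intro x hx
    have h := ((contOn_sq x hx).div_const 2)
    simpa using h
  have hderiv : ∀ x ∈ Set.Ioo (1:ℝ) ccD,
      HasDerivAt F (Real.sqrt (x ^ 2 - (x ^ 2)⁻¹)) x := by
    intro x hx
    have hx1 : 1 < x := hx.1
    have hx0 : 0 < x := by linarith
    have hu : 0 < x ^ 4 - 1 := by
      have h2 : 1 < x ^ 2 := by nlinarith
      nlinarith
    set q := Real.sqrt (x ^ 4 - 1) with hq
    have hq0 : 0 < q := Real.sqrt_pos.mpr hu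
    have hq2 : q ^ 2 = x ^ 4 - 1 := Real.sq_sqrt hu.le
    have h1 : HasDerivAt (fun x : ℝ => x ^ 4 - 1) (4 * x ^ 3) x := by
      simpa using (hasDerivAt_pow 4 x).sub_const 1
    have h2 : HasDerivAt (fun y : ℝ => Real.sqrt y) (1 / (2 * q)) (x ^ 4 - 1) :=
      Real.hasDerivAt_sqrt hu.ne'
    have hs : HasDerivAt (fun x : ℝ => Real.sqrt (x ^ 4 - 1)) (1 / (2 * q) * (4 * x ^ 3)) x :=
      h2.comp x h1
    have h3 : HasDerivAt Real.arctan (1 / (1 + q ^ 2)) q := Real.hasDerivAt_arctan q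
    have hA : HasDerivAt (fun x : ℝ => Real.arctan (Real.sqrt (x ^ 4 - 1)))
        (1 / (1 + q ^ 2) * (1 / (2 * q) * (4 * x ^ 3))) x := by
      have := h3.comp x hs; exact this
    have hD := (hs.sub hA).div_const 2
    refine hD.congr_deriv (Eq.symm ?_)
    have hval : Real.sqrt (x ^ 2 - (x ^ 2)⁻¹) = q / x := by
      have he : x ^ 2 - (x ^ 2)⁻¹ = (x ^ 4 - 1) / x ^ 2 := by
        field_simp
      rw [he, Real.sqrt_div hu.le, Real.sqrt_sq hx0.le]
    rw [hval, hq2, show (1:ℝ) + (x ^ 4 - 1) = x ^ 4 by ring]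
    have hx4 : (x:ℝ) ^ 4 ≠ 0 := by positivity
    field_simp
    linear_combination 4 * hq2
  rw [intervalIntegral.integral_eq_sub_of_hasDerivAt_of_le hle hcontF hderiv hint]
  have hc4 : ccD ^ 4 - 1 = 3⁻¹ := by rw [ccD_pow]; norm_num
  have h1 : (1:ℝ) ^ 4 - 1 = 0 := by norm_num
  simp only [hF, hc4, h1, Real.sqrt_zero, Real.arctan_zero, Real.sqrt_inv,
    _root_.arctan_inv_sqrt_three]
  ring

lemma integral_gD : ∫ s, gD s = π / 6 := by
  rw [gD_eq, integral_sub int1 int2, integral_indicator measurableSet_Ioo,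
    integral_indicator measurableSet_Ioo,
    ← MeasureTheory.integral_Ioc_eq_integral_Ioo, ← MeasureTheory.integral_Ioc_eq_integral_Ioo,
    ← intervalIntegral.integral_of_le (by linarith [one_lt_ccD] : (0:ℝ) ≤ ccD),
    ← intervalIntegral.integral_of_le one_lt_ccD.le,
    integral_id, intervalIntegral.integral_const_mul, integralA]
  have := ccD_sq
  nlinarith [ccD_sq]

lemma gD_nonneg : ∀ s, 0 ≤ gD s := by
  intro s
  rw [gD]
  split_ifs with h1 h2
  · obtain ⟨hs0, hsc⟩ := h1
    have hs4 : s ^ 4 < 4 / 3 := (lt_ccD_iff hs0.le).mp hsc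
    have ha : Real.sqrt (s ^ 2 - (s ^ 2)⁻¹) ≤ s / 2 := by
      rw [show s / 2 = Real.sqrt ((s / 2) ^ 2) from (Real.sqrt_sq (by linarith)).symm]
      apply Real.sqrt_le_sqrt
      have hs2 : (0:ℝ) < s ^ 2 := by positivity
      rw [← sub_nonneg]
      have he : (s / 2) ^ 2 - (s ^ 2 - (s ^ 2)⁻¹) = (4 - 3 * s ^ 4) / (4 * s ^ 2) := by
        field_simp; ring
      rw [he]
      apply div_nonneg (by nlinarith) (by positivity)
    linarith
  · linarith [h1.1]
  · exact le_refl _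

lemma integrable_gD : Integrable gD := by
  rw [gD_eq]; exact int1.sub int2

lemma lintegral_gD : ∫⁻ s, ENNReal.ofReal (gD s) = ENNReal.ofReal (π / 6) := by
  rw [← ofReal_integral_eq_lintegral_ofReal integrable_gD
    (Filter.Eventually.of_forall gD_nonneg), integral_gD]

lemma vol_Dset : volume Dset = ENNReal.ofReal (π / 6) := by
  have h := congrArg (fun μ : Measure ℝ => μ Set.univ) map_fst_restrict
  rw [Measure.map_apply measurable_fst MeasurableSet.univ, Set.preimage_univ,
    Measure.restrict_apply_univ] at h
  rw [h, withDensity_apply _ MeasurableSet.univ, setLIntegral_univ, lintegral_gD]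

theorem stmt15 :
    Measure.map Prod.fst μD =
      volume.withDensity (fun s : ℝ =>
        ENNReal.ofReal
          (if 0 < s ∧ s < (4 / 3 : ℝ) ^ ((1 : ℝ) / 4) then
            (12 / π) * (s / 2 - if 1 < s then Real.sqrt (s ^ 2 - (s ^ 2)⁻¹) else 0)
          else 0)) := by
  have hπ : (0:ℝ) < π := pi_pos
  rw [μD, Measure.map_smul, map_fst_restrict, vol_Dset,
    ← withDensity_smul _ (measurable_gD.ennreal_ofReal)]
  congr 1
  funext s
  simp only [Pi.smul_apply, smul_eq_mul]
  rw [← ENNReal.ofReal_inv_of_pos (by positivity : (0:ℝ) < π / 6),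
    ← ENNReal.ofReal_mul (by positivity : (0:ℝ) ≤ (π / 6)⁻¹)]
  congr 1
  rw [gD, show (4 / 3 : ℝ) ^ ((1 : ℝ) / 4) = ccD from rfl]
  split_ifs with h1 h2
  · field_simp; ring
  · field_simp; ring
  · simp
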